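/- With the augmented estimating function Ξ_{ā(1)} defined as in the two-occasion proximal doubly robust construction, if the treatment bridge functions (q1, q0) satisfy their latent-level bridge equations but the functions (h1, h0) used in Ξ are arbitrary measurable functions of (W̄(1), Ā(1), X̄(1)) and (W(0), Ā(1), X(0)) respectively, then still E[Ξ_{ā(1)} | V] = E[Y_{ā(1)} | V]. -/

import Mathlib

open Finset MeasureTheory

open scoped Classical

/-- Probability of an event on a finite outcome space with mass function `p`. -/
noncomputable def pr {Ω : Type*} [Fintype Ω] (p : Ω → ℝ) (E : Ω → Prop) : ℝ :=
  ∑ ω, if E ω then p ω else 0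

/-- Conditional expectation `E[f | E]` on a finite outcome space. -/
noncomputable def cexp {Ω : Type*} [Fintype Ω] (p : Ω → ℝ) (f : Ω → ℝ) (E : Ω → Prop) : ℝ :=
  (∑ ω, if E ω then p ω * f ω else 0) / pr p E

/-- Conditional probability `P(E | F)` on a finite outcome space. -/
noncomputable def cprob {Ω : Type*} [Fintype Ω] (p : Ω → ℝ) (E F : Ω → Prop) : ℝ :=
  pr p (fun ω => E ω ∧ F ω) / pr p F

/-- Expectation on a finite outcome space. -/
noncomputable def pexp {Ω : Type*} [Fintype Ω] (p : Ω → ℝ) (f : Ω → ℝ) : ℝ :=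
  ∑ ω, p ω * f ω

/-- `S` is conditionally independent of `T` given `C`:  for every pair of (bounded) test
functions `F, G` and every value `c` of `C` with positive probability, the conditional
expectation of the product factorizes. -/
def CondIndep {Ω α β γ : Type*} [Fintype Ω] (p : Ω → ℝ)
    (S : Ω → α) (T : Ω → β) (C : Ω → γ) : Prop :=
  ∀ (F : α → ℝ) (G : β → ℝ) (c : γ), pr p (fun ω => C ω = c) ≠ 0 →
    cexp p (fun ω => F (S ω) * G (T ω)) (fun ω => C ω = c) =
      cexp p (fun ω => F (S ω)) (fun ω => C ω = c) *
        cexp p (fun ω => G (T ω)) (fun ω => C ω = c)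

section DR14
variable {Ω : Type*} [Fintype Ω]

noncomputable def dr14Sev (p : Ω → ℝ) (f : Ω → ℝ) (E : Ω → Prop) : ℝ :=
  ∑ ω, if E ω then p ω * f ω else 0

lemma dr14_cexp_eq (p f : Ω → ℝ) (E : Ω → Prop) :
    cexp p f E = dr14Sev p f E / pr p E := rfl

lemma dr14Sev_congr (p : Ω → ℝ) {f g : Ω → ℝ} {E E' : Ω → Prop}
    (hE : ∀ ω, E ω ↔ E' ω) (hf : ∀ ω, E ω → f ω = g ω) :
    dr14Sev p f E = dr14Sev p g E' := by
  unfold dr14Sev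
  apply Finset.sum_congr rfl
  intro ω _
  by_cases h : E ω
  · rw [if_pos h, if_pos ((hE ω).1 h), hf ω h]
  · rw [if_neg h, if_neg (fun h' => h ((hE ω).2 h'))]

lemma dr14_pr_congr (p : Ω → ℝ) {E E' : Ω → Prop} (hE : ∀ ω, E ω ↔ E' ω) :
    pr p E = pr p E' := by
  unfold pr; apply Finset.sum_congr rfl; intro ω _; simp [hE ω]

lemma dr14Sev_indicator (p f : Ω → ℝ) (E : Ω → Prop) (Q : Ω → Prop) [DecidablePred Q] :
    dr14Sev p (fun ω => (if Q ω then (1:ℝ) else 0) * f ω) E =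
      dr14Sev p f (fun ω => E ω ∧ Q ω) := by
  unfold dr14Sev
  apply Finset.sum_congr rfl
  intro ω _
  by_cases hE : E ω <;> by_cases hQ : Q ω <;> simp [hE, hQ]

lemma dr14_pr_zero {p : Ω → ℝ} (hp : ∀ ω, 0 ≤ p ω) {E : Ω → Prop}
    (h : pr p E = 0) : ∀ ω, E ω → p ω = 0 := by
  intro ω hω
  have h0 : ∀ i ∈ Finset.univ, (0:ℝ) ≤ if E i then p i else 0 := by
    intro i _; split
    · exact hp i
    · exact le_rfl
  have := (Finset.sum_eq_zero_iff_of_nonneg h0).1 h ω (Finset.mem_univ ω)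
  simpa [hω] using this

lemma dr14Sev_zero {p : Ω → ℝ} (hp : ∀ ω, 0 ≤ p ω) {E : Ω → Prop}
    (h : pr p E = 0) (f : Ω → ℝ) : dr14Sev p f E = 0 := by
  unfold dr14Sev
  apply Finset.sum_eq_zero
  intro ω _
  by_cases hE : E ω
  · rw [if_pos hE, dr14_pr_zero hp h ω hE, zero_mul]
  · rw [if_neg hE]

lemma dr14Sev_add (p f g : Ω → ℝ) (E : Ω → Prop) :
    dr14Sev p (fun ω => f ω + g ω) E = dr14Sev p f E + dr14Sev p g E := by
  unfold dr14Sev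
  rw [← Finset.sum_add_distrib]
  apply Finset.sum_congr rfl
  intro ω _; split <;> ring

lemma dr14Sev_sub (p f g : Ω → ℝ) (E : Ω → Prop) :
    dr14Sev p (fun ω => f ω - g ω) E = dr14Sev p f E - dr14Sev p g E := by
  unfold dr14Sev
  rw [← Finset.sum_sub_distrib]
  apply Finset.sum_congr rfl
  intro ω _; split <;> ring

lemma dr14_tower {γ : Type*} {p : Ω → ℝ} (hp : ∀ ω, 0 ≤ p ω) (C : Ω → γ)
    (f g : Ω → ℝ)
    (h : ∀ c, pr p (fun ω => C ω = c) ≠ 0 →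
      dr14Sev p f (fun ω => C ω = c) = dr14Sev p g (fun ω => C ω = c))
    (φ : γ → Prop) :
    dr14Sev p f (fun ω => φ (C ω)) = dr14Sev p g (fun ω => φ (C ω)) := by
  have key : ∀ (f : Ω → ℝ), dr14Sev p f (fun ω => φ (C ω)) =
      ∑ c ∈ univ.image C, if φ c then dr14Sev p f (fun ω => C ω = c) else 0 := by
    intro f
    unfold dr14Sev
    rw [← Finset.sum_fiberwise_of_maps_to (fun x _ => mem_image_of_mem C (mem_univ x))
      (f := fun ω => if φ (C ω) then p ω * f ω else 0)]
    apply Finset.sum_congr rfl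
    intro c _
    rw [Finset.sum_filter]
    by_cases hc : φ c
    · rw [if_pos hc]
      apply Finset.sum_congr rfl
      intro ω _
      by_cases h1 : C ω = c
      · rw [if_pos h1, if_pos h1, if_pos (by rw [h1]; exact hc)]
      · rw [if_neg h1, if_neg h1]
    · rw [if_neg hc]
      apply Finset.sum_eq_zero
      intro ω _
      by_cases h1 : C ω = c
      · rw [if_pos h1, if_neg (by rw [h1]; exact hc)]
      · rw [if_neg h1]
  rw [key f, key g]
  apply Finset.sum_congr rfl
  intro c _
  by_cases hc : φ c
  · rw [if_pos hc, if_pos hc]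
    by_cases hz : pr p (fun ω => C ω = c) = 0
    · rw [dr14Sev_zero hp hz, dr14Sev_zero hp hz]
    · exact h c hz
  · rw [if_neg hc, if_neg hc]

lemma dr14_condIndep_Sev {α β γ : Type*} {p : Ω → ℝ} {S : Ω → α} {T : Ω → β}
    {C : Ω → γ} (hCI : CondIndep p S T C) (F : α → ℝ) (G : β → ℝ) {c : γ}
    (hne : pr p (fun ω => C ω = c) ≠ 0) :
    dr14Sev p (fun ω => F (S ω) * G (T ω)) (fun ω => C ω = c) =
      dr14Sev p (fun ω => F (S ω)) (fun ω => C ω = c) *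
        dr14Sev p (fun ω => G (T ω)) (fun ω => C ω = c) / pr p (fun ω => C ω = c) := by
  have h := hCI F G c hne
  rw [dr14_cexp_eq, dr14_cexp_eq, dr14_cexp_eq] at h
  field_simp at h
  rw [eq_div_iff hne]
  apply mul_right_cancel₀ hne
  linear_combination (pr p (fun ω => C ω = c)) * h

end DR14

/-- double robustness, treatment-bridge side: if `(q1, q0)` satisfy their
latent-level treatment bridge equations, then the augmented estimating function `Ξ` built
with *arbitrary* functions `(h1, h0)` of the outcome-inducing proxies still satisfies
`E[Ξ_{ā(1)} | V] = E[Y_{ā(1)} | V]`. -/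
theorem stmt_14 {Ω 𝒳0 𝒳1 𝒵0 𝒵1 𝒲0 𝒲1 𝒰0 𝒰1 𝒱 : Type*} [Fintype Ω]
    (p : Ω → ℝ) (hp : ∀ ω, 0 ≤ p ω) (hsum : ∑ ω, p ω = 1)
    (A0 A1 : Ω → Bool) (X0 : Ω → 𝒳0) (X1 : Ω → 𝒳1)
    (Z0 : Ω → 𝒵0) (Z1 : Ω → 𝒵1) (W0 : Ω → 𝒲0) (W1 : Ω → 𝒲1)
    (U0 : Ω → 𝒰0) (U1 : Ω → 𝒰1)
    (Y : Ω → ℝ) (Y' : Bool → Bool → Ω → ℝ) (W1' : Bool → Ω → 𝒲1)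
    -- arbitrary measurable functions in place of the outcome bridges
    (h1 : 𝒲0 × 𝒲1 → Bool × Bool → 𝒳0 × 𝒳1 → ℝ)
    (h0 : 𝒲0 → Bool × Bool → 𝒳0 → ℝ)
    (q0 : 𝒵0 → Bool → 𝒳0 → ℝ)
    (q1 : 𝒵0 × 𝒵1 → Bool × Bool → 𝒳0 × 𝒳1 → ℝ)
    (v : 𝒳0 → 𝒱)
    -- consistency and positivity
    (hconsY : ∀ ω, Y ω = Y' (A0 ω) (A1 ω) ω)
    (hconsW : ∀ ω, W1 ω = W1' (A0 ω) ω)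
    (hpos0 : ∀ (a : Bool) u0 x0, pr p (fun ω => U0 ω = u0 ∧ X0 ω = x0) ≠ 0 →
      0 < cprob p (fun ω => A0 ω = a) (fun ω => U0 ω = u0 ∧ X0 ω = x0))
    (hpos1 : ∀ (a a' : Bool) u0 u1 x0 x1,
      pr p (fun ω => A0 ω = a' ∧ U0 ω = u0 ∧ U1 ω = u1 ∧ X0 ω = x0 ∧ X1 ω = x1) ≠ 0 →
      0 < cprob p (fun ω => A1 ω = a)
        (fun ω => A0 ω = a' ∧ U0 ω = u0 ∧ U1 ω = u1 ∧ X0 ω = x0 ∧ X1 ω = x1))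
    -- sequential proximal latent randomization
    (hLR1 : ∀ b0 b1 : Bool, CondIndep p (fun ω => (Z0 ω, Z1 ω, A1 ω))
      (fun ω => (W0 ω, W1' b0 ω, Y' b0 b1 ω))
      (fun ω => (A0 ω, X0 ω, X1 ω, U0 ω, U1 ω)))
    (hLR0 : ∀ b0 b1 : Bool, CondIndep p (fun ω => (Z0 ω, A0 ω))
      (fun ω => (W0 ω, Y' b0 b1 ω)) (fun ω => (X0 ω, U0 ω)))
    -- latent-level treatment bridge equations for (q0, q1)
    (hbridgeq0 : ∀ (b0 : Bool) u0 x0,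
      pr p (fun ω => A0 ω = b0 ∧ U0 ω = u0 ∧ X0 ω = x0) ≠ 0 →
      (cprob p (fun ω => A0 ω = b0) (fun ω => U0 ω = u0 ∧ X0 ω = x0))⁻¹ =
        cexp p (fun ω => q0 (Z0 ω) b0 (X0 ω))
          (fun ω => A0 ω = b0 ∧ U0 ω = u0 ∧ X0 ω = x0))
    (hbridgeq1 : ∀ (b0 b1 : Bool) u0 u1 x0 x1,
      pr p (fun ω => A0 ω = b0 ∧ A1 ω = b1 ∧ U0 ω = u0 ∧ U1 ω = u1 ∧
        X0 ω = x0 ∧ X1 ω = x1) ≠ 0 →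
      cexp p (fun ω => q0 (Z0 ω) b0 (X0 ω))
          (fun ω => A0 ω = b0 ∧ U0 ω = u0 ∧ U1 ω = u1 ∧ X0 ω = x0 ∧ X1 ω = x1) /
        cprob p (fun ω => A1 ω = b1)
          (fun ω => A0 ω = b0 ∧ U0 ω = u0 ∧ U1 ω = u1 ∧ X0 ω = x0 ∧ X1 ω = x1) =
      cexp p (fun ω => q1 (Z0 ω, Z1 ω) (b0, b1) (X0 ω, X1 ω))
        (fun ω => A0 ω = b0 ∧ A1 ω = b1 ∧ U0 ω = u0 ∧ U1 ω = u1 ∧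
          X0 ω = x0 ∧ X1 ω = x1))
    -- the augmented (doubly-robust) estimating function Ξ
    (Xi : Bool × Bool → Ω → ℝ)
    (hXi : ∀ (b0 b1 : Bool) ω, Xi (b0, b1) ω =
      (if A0 ω = b0 ∧ A1 ω = b1 then (1 : ℝ) else 0) *
          q1 (Z0 ω, Z1 ω) (b0, b1) (X0 ω, X1 ω) *
          (Y ω - h1 (W0 ω, W1 ω) (b0, b1) (X0 ω, X1 ω)) +
        (if A0 ω = b0 then (1 : ℝ) else 0) * q0 (Z0 ω) b0 (X0 ω) *
          (h1 (W0 ω, W1 ω) (b0, b1) (X0 ω, X1 ω) - h0 (W0 ω) (b0, b1) (X0 ω)) +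
        h0 (W0 ω) (b0, b1) (X0 ω)) :
    ∀ (b0 b1 : Bool) (c : 𝒱), pr p (fun ω => v (X0 ω) = c) ≠ 0 →
      cexp p (Xi (b0, b1)) (fun ω => v (X0 ω) = c) =
        cexp p (Y' b0 b1) (fun ω => v (X0 ω) = c) := by
  intro b0 b1 c hV
  -- reduce conditional expectations to the common-denominator numerators
  rw [dr14_cexp_eq, dr14_cexp_eq]
  congr 1
  -- iff lemma for the 5-tuple conditioning variable
  have hC1iff : ∀ (a0 : Bool) (x0 : 𝒳0) (x1 : 𝒳1) (u0 : 𝒰0) (u1 : 𝒰1) (ω : Ω),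
      (A0 ω, X0 ω, X1 ω, U0 ω, U1 ω) = (a0, x0, x1, u0, u1) ↔
        A0 ω = a0 ∧ X0 ω = x0 ∧ X1 ω = x1 ∧ U0 ω = u0 ∧ U1 ω = u1 := by
    intro a0 x0 x1 u0 u1 ω
    simp [Prod.ext_iff]
  have hC0iff : ∀ (x0 : 𝒳0) (u0 : 𝒰0) (ω : Ω),
      (X0 ω, U0 ω) = (x0, u0) ↔ X0 ω = x0 ∧ U0 ω = u0 := by
    intro x0 u0 ω
    simp [Prod.ext_iff]
  ---------------------------------------------------------------------------
  -- CLAIM 1 : one-step telescoping on the inner (occasion-1) weight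
  ---------------------------------------------------------------------------
  have claim1 : ∀ (G : 𝒲0 × 𝒲1 × ℝ → 𝒳0 × 𝒳1 → ℝ),
      dr14Sev p (fun ω => (if A0 ω = b0 ∧ A1 ω = b1 then (1:ℝ) else 0) *
          q1 (Z0 ω, Z1 ω) (b0, b1) (X0 ω, X1 ω) *
          G (W0 ω, W1' b0 ω, Y' b0 b1 ω) (X0 ω, X1 ω)) (fun ω => v (X0 ω) = c) =
        dr14Sev p (fun ω => (if A0 ω = b0 then (1:ℝ) else 0) * q0 (Z0 ω) b0 (X0 ω) *
          G (W0 ω, W1' b0 ω, Y' b0 b1 ω) (X0 ω, X1 ω)) (fun ω => v (X0 ω) = c) := by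
    intro G
    refine dr14_tower hp (fun ω => (A0 ω, X0 ω, X1 ω, U0 ω, U1 ω)) _ _ ?_
      (fun t => v t.2.1 = c)
    rintro ⟨a0, x0, x1, u0, u1⟩ hne
    by_cases ha0 : a0 = b0
    · rw [ha0] at hne ⊢
      -- positivity / nonvanishing bookkeeping
      have hE2 : (fun ω => (A0 ω, X0 ω, X1 ω, U0 ω, U1 ω) = (b0, x0, x1, u0, u1)) =
          (fun ω => (A0 ω, X0 ω, X1 ω, U0 ω, U1 ω) = (b0, x0, x1, u0, u1)) := rfl
      have hprE2 : pr p (fun ω => (A0 ω, X0 ω, X1 ω, U0 ω, U1 ω) = (b0, x0, x1, u0, u1)) =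
          pr p (fun ω => A0 ω = b0 ∧ U0 ω = u0 ∧ U1 ω = u1 ∧ X0 ω = x0 ∧ X1 ω = x1) := by
        apply dr14_pr_congr
        intro ω
        rw [hC1iff]
        tauto
      have hE2ne : pr p (fun ω => A0 ω = b0 ∧ U0 ω = u0 ∧ U1 ω = u1 ∧ X0 ω = x0 ∧ X1 ω = x1) ≠ 0 := by
        rw [← hprE2]; exact hne
      have hposc := hpos1 b1 b0 u0 u1 x0 x1 hE2ne
      have hABne : pr p (fun ω => A1 ω = b1 ∧ A0 ω = b0 ∧ U0 ω = u0 ∧ U1 ω = u1 ∧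
          X0 ω = x0 ∧ X1 ω = x1) ≠ 0 := by
        intro h
        rw [cprob, h, zero_div] at hposc
        exact lt_irrefl 0 hposc
      have hprB : pr p (fun ω => A1 ω = b1 ∧ A0 ω = b0 ∧ U0 ω = u0 ∧ U1 ω = u1 ∧
            X0 ω = x0 ∧ X1 ω = x1) =
          pr p (fun ω => A0 ω = b0 ∧ A1 ω = b1 ∧ U0 ω = u0 ∧ U1 ω = u1 ∧
            X0 ω = x0 ∧ X1 ω = x1) := by
        apply dr14_pr_congr; intro ω; tauto
      have hBne : pr p (fun ω => A0 ω = b0 ∧ A1 ω = b1 ∧ U0 ω = u0 ∧ U1 ω = u1 ∧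
          X0 ω = x0 ∧ X1 ω = x1) ≠ 0 := by
        rw [← hprB]; exact hABne
      -- the key identity:  E[1{A1=b1} q1 | fiber] ⋅ pr = E[q0 | fiber] ⋅ pr
      have key : dr14Sev p (fun ω => (if A1 ω = b1 then (1:ℝ) else 0) *
            q1 (Z0 ω, Z1 ω) (b0, b1) (x0, x1))
            (fun ω => (A0 ω, X0 ω, X1 ω, U0 ω, U1 ω) = (b0, x0, x1, u0, u1)) =
          dr14Sev p (fun ω => q0 (Z0 ω) b0 x0)
            (fun ω => (A0 ω, X0 ω, X1 ω, U0 ω, U1 ω) = (b0, x0, x1, u0, u1)) := by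
        rw [dr14Sev_indicator]
        have e1 : dr14Sev p (fun ω => q1 (Z0 ω, Z1 ω) (b0, b1) (x0, x1))
              (fun ω => (A0 ω, X0 ω, X1 ω, U0 ω, U1 ω) = (b0, x0, x1, u0, u1) ∧ A1 ω = b1) =
            dr14Sev p (fun ω => q1 (Z0 ω, Z1 ω) (b0, b1) (X0 ω, X1 ω))
              (fun ω => A0 ω = b0 ∧ A1 ω = b1 ∧ U0 ω = u0 ∧ U1 ω = u1 ∧
                X0 ω = x0 ∧ X1 ω = x1) := by
          apply dr14Sev_congr
          · intro ω; rw [hC1iff]; tauto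
          · rintro ω ⟨h5, hA1⟩
            obtain ⟨-, hX0, hX1, -, -⟩ := (hC1iff b0 x0 x1 u0 u1 ω).1 h5
            rw [hX0, hX1]
        have e0 : dr14Sev p (fun ω => q0 (Z0 ω) b0 x0)
              (fun ω => (A0 ω, X0 ω, X1 ω, U0 ω, U1 ω) = (b0, x0, x1, u0, u1)) =
            dr14Sev p (fun ω => q0 (Z0 ω) b0 (X0 ω))
              (fun ω => A0 ω = b0 ∧ U0 ω = u0 ∧ U1 ω = u1 ∧ X0 ω = x0 ∧ X1 ω = x1) := by
          apply dr14Sev_congr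
          · intro ω; rw [hC1iff]; tauto
          · intro ω h5
            obtain ⟨-, hX0, -, -, -⟩ := (hC1iff b0 x0 x1 u0 u1 ω).1 h5
            rw [hX0]
        rw [e1, e0]
        -- now use the bridge equation for q1
        have hb := hbridgeq1 b0 b1 u0 u1 x0 x1 hBne
        have hSq1 : dr14Sev p (fun ω => q1 (Z0 ω, Z1 ω) (b0, b1) (X0 ω, X1 ω))
              (fun ω => A0 ω = b0 ∧ A1 ω = b1 ∧ U0 ω = u0 ∧ U1 ω = u1 ∧
                X0 ω = x0 ∧ X1 ω = x1) =
            cexp p (fun ω => q1 (Z0 ω, Z1 ω) (b0, b1) (X0 ω, X1 ω))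
              (fun ω => A0 ω = b0 ∧ A1 ω = b1 ∧ U0 ω = u0 ∧ U1 ω = u1 ∧
                X0 ω = x0 ∧ X1 ω = x1) *
            pr p (fun ω => A0 ω = b0 ∧ A1 ω = b1 ∧ U0 ω = u0 ∧ U1 ω = u1 ∧
                X0 ω = x0 ∧ X1 ω = x1) := by
          rw [dr14_cexp_eq, div_mul_cancel₀ _ hBne]
        have hSq0 : dr14Sev p (fun ω => q0 (Z0 ω) b0 (X0 ω))
              (fun ω => A0 ω = b0 ∧ U0 ω = u0 ∧ U1 ω = u1 ∧ X0 ω = x0 ∧ X1 ω = x1) =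
            cexp p (fun ω => q0 (Z0 ω) b0 (X0 ω))
              (fun ω => A0 ω = b0 ∧ U0 ω = u0 ∧ U1 ω = u1 ∧ X0 ω = x0 ∧ X1 ω = x1) *
            pr p (fun ω => A0 ω = b0 ∧ U0 ω = u0 ∧ U1 ω = u1 ∧ X0 ω = x0 ∧ X1 ω = x1) := by
          rw [dr14_cexp_eq, div_mul_cancel₀ _ hE2ne]
        rw [hSq1, hSq0, ← hb]
        have hcprob : cprob p (fun ω => A1 ω = b1)
            (fun ω => A0 ω = b0 ∧ U0 ω = u0 ∧ U1 ω = u1 ∧ X0 ω = x0 ∧ X1 ω = x1) =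
            pr p (fun ω => A0 ω = b0 ∧ A1 ω = b1 ∧ U0 ω = u0 ∧ U1 ω = u1 ∧
                X0 ω = x0 ∧ X1 ω = x1) /
            pr p (fun ω => A0 ω = b0 ∧ U0 ω = u0 ∧ U1 ω = u1 ∧ X0 ω = x0 ∧ X1 ω = x1) := by
          rw [cprob]
          congr 1
        rw [hcprob]
        field_simp
      -- rewrite LHS and RHS into F ⋅ G form and factorize via latent randomization
      have eL : dr14Sev p (fun ω => (if A0 ω = b0 ∧ A1 ω = b1 then (1:ℝ) else 0) *
            q1 (Z0 ω, Z1 ω) (b0, b1) (X0 ω, X1 ω) *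
            G (W0 ω, W1' b0 ω, Y' b0 b1 ω) (X0 ω, X1 ω))
            (fun ω => (A0 ω, X0 ω, X1 ω, U0 ω, U1 ω) = (b0, x0, x1, u0, u1)) =
          dr14Sev p (fun ω =>
            (fun t : 𝒵0 × 𝒵1 × Bool => (if t.2.2 = b1 then (1:ℝ) else 0) *
              q1 (t.1, t.2.1) (b0, b1) (x0, x1)) (Z0 ω, Z1 ω, A1 ω) *
            (fun s : 𝒲0 × 𝒲1 × ℝ => G s (x0, x1)) (W0 ω, W1' b0 ω, Y' b0 b1 ω))
            (fun ω => (A0 ω, X0 ω, X1 ω, U0 ω, U1 ω) = (b0, x0, x1, u0, u1)) := by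
        apply dr14Sev_congr p (fun ω => Iff.rfl)
        intro ω hω
        obtain ⟨hA, hX0, hX1, -, -⟩ := (hC1iff b0 x0 x1 u0 u1 ω).1 hω
        simp only [hA, hX0, hX1, eq_self_iff_true, true_and]
      have eR : dr14Sev p (fun ω => (if A0 ω = b0 then (1:ℝ) else 0) * q0 (Z0 ω) b0 (X0 ω) *
            G (W0 ω, W1' b0 ω, Y' b0 b1 ω) (X0 ω, X1 ω))
            (fun ω => (A0 ω, X0 ω, X1 ω, U0 ω, U1 ω) = (b0, x0, x1, u0, u1)) =
          dr14Sev p (fun ω =>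
            (fun t : 𝒵0 × 𝒵1 × Bool => q0 t.1 b0 x0) (Z0 ω, Z1 ω, A1 ω) *
            (fun s : 𝒲0 × 𝒲1 × ℝ => G s (x0, x1)) (W0 ω, W1' b0 ω, Y' b0 b1 ω))
            (fun ω => (A0 ω, X0 ω, X1 ω, U0 ω, U1 ω) = (b0, x0, x1, u0, u1)) := by
        apply dr14Sev_congr p (fun ω => Iff.rfl)
        intro ω hω
        obtain ⟨hA, hX0, hX1, -, -⟩ := (hC1iff b0 x0 x1 u0 u1 ω).1 hω
        simp only [hA, hX0, hX1, eq_self_iff_true, if_true, one_mul]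
      rw [eL, eR,
        dr14_condIndep_Sev (hLR1 b0 b1)
          (fun t : 𝒵0 × 𝒵1 × Bool => (if t.2.2 = b1 then (1:ℝ) else 0) *
            q1 (t.1, t.2.1) (b0, b1) (x0, x1))
          (fun s : 𝒲0 × 𝒲1 × ℝ => G s (x0, x1)) hne,
        dr14_condIndep_Sev (hLR1 b0 b1)
          (fun t : 𝒵0 × 𝒵1 × Bool => q0 t.1 b0 x0)
          (fun s : 𝒲0 × 𝒲1 × ℝ => G s (x0, x1)) hne]
      congr 2
    · -- a0 ≠ b0 : both sides vanish
      have z : ∀ f : Ω → ℝ,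
          dr14Sev p (fun ω => (if A0 ω = b0 ∧ A1 ω = b1 then (1:ℝ) else 0) *
            q1 (Z0 ω, Z1 ω) (b0, b1) (X0 ω, X1 ω) *
            G (W0 ω, W1' b0 ω, Y' b0 b1 ω) (X0 ω, X1 ω))
            (fun ω => (A0 ω, X0 ω, X1 ω, U0 ω, U1 ω) = (a0, x0, x1, u0, u1)) = 0 := by
        intro f
        have : dr14Sev p (fun ω => (if A0 ω = b0 ∧ A1 ω = b1 then (1:ℝ) else 0) *
              q1 (Z0 ω, Z1 ω) (b0, b1) (X0 ω, X1 ω) *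
              G (W0 ω, W1' b0 ω, Y' b0 b1 ω) (X0 ω, X1 ω))
              (fun ω => (A0 ω, X0 ω, X1 ω, U0 ω, U1 ω) = (a0, x0, x1, u0, u1)) =
            dr14Sev p (fun _ => (0:ℝ))
              (fun ω => (A0 ω, X0 ω, X1 ω, U0 ω, U1 ω) = (a0, x0, x1, u0, u1)) := by
          apply dr14Sev_congr p (fun ω => Iff.rfl)
          intro ω hω
          obtain ⟨hA, -, -, -, -⟩ := (hC1iff a0 x0 x1 u0 u1 ω).1 hω
          have : ¬ (A0 ω = b0) := by rw [hA]; exact ha0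
          simp [this]
        rw [this]
        simp [dr14Sev]
      have z' : dr14Sev p (fun ω => (if A0 ω = b0 then (1:ℝ) else 0) * q0 (Z0 ω) b0 (X0 ω) *
            G (W0 ω, W1' b0 ω, Y' b0 b1 ω) (X0 ω, X1 ω))
            (fun ω => (A0 ω, X0 ω, X1 ω, U0 ω, U1 ω) = (a0, x0, x1, u0, u1)) = 0 := by
        have : dr14Sev p (fun ω => (if A0 ω = b0 then (1:ℝ) else 0) * q0 (Z0 ω) b0 (X0 ω) *
              G (W0 ω, W1' b0 ω, Y' b0 b1 ω) (X0 ω, X1 ω))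
              (fun ω => (A0 ω, X0 ω, X1 ω, U0 ω, U1 ω) = (a0, x0, x1, u0, u1)) =
            dr14Sev p (fun _ => (0:ℝ))
              (fun ω => (A0 ω, X0 ω, X1 ω, U0 ω, U1 ω) = (a0, x0, x1, u0, u1)) := by
          apply dr14Sev_congr p (fun ω => Iff.rfl)
          intro ω hω
          obtain ⟨hA, -, -, -, -⟩ := (hC1iff a0 x0 x1 u0 u1 ω).1 hω
          have : ¬ (A0 ω = b0) := by rw [hA]; exact ha0
          simp [this]
        rw [this]
        simp [dr14Sev]
      rw [z (fun _ => 0), z']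
  ---------------------------------------------------------------------------
  -- CLAIM 0 : removing the outer (occasion-0) weight
  ---------------------------------------------------------------------------
  have claim0 : ∀ (G : 𝒲0 × ℝ → 𝒳0 → ℝ),
      dr14Sev p (fun ω => (if A0 ω = b0 then (1:ℝ) else 0) * q0 (Z0 ω) b0 (X0 ω) *
          G (W0 ω, Y' b0 b1 ω) (X0 ω)) (fun ω => v (X0 ω) = c) =
        dr14Sev p (fun ω => G (W0 ω, Y' b0 b1 ω) (X0 ω)) (fun ω => v (X0 ω) = c) := by
    intro G
    refine dr14_tower hp (fun ω => (X0 ω, U0 ω)) _ _ ?_ (fun t => v t.1 = c)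
    rintro ⟨x0, u0⟩ hne
    have hprE0 : pr p (fun ω => (X0 ω, U0 ω) = (x0, u0)) =
        pr p (fun ω => U0 ω = u0 ∧ X0 ω = x0) := by
      apply dr14_pr_congr; intro ω; rw [hC0iff]; tauto
    have hE0ne : pr p (fun ω => U0 ω = u0 ∧ X0 ω = x0) ≠ 0 := by
      rw [← hprE0]; exact hne
    have hposc := hpos0 b0 u0 x0 hE0ne
    have hABne : pr p (fun ω => A0 ω = b0 ∧ U0 ω = u0 ∧ X0 ω = x0) ≠ 0 := by
      intro h
      rw [cprob, h, zero_div] at hposc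
      exact lt_irrefl 0 hposc
    -- E[ 1{A0 = b0} q0 | fiber ] ⋅ pr = pr
    have key : dr14Sev p (fun ω => (if A0 ω = b0 then (1:ℝ) else 0) * q0 (Z0 ω) b0 x0)
          (fun ω => (X0 ω, U0 ω) = (x0, u0)) =
        pr p (fun ω => (X0 ω, U0 ω) = (x0, u0)) := by
      rw [dr14Sev_indicator]
      have e1 : dr14Sev p (fun ω => q0 (Z0 ω) b0 x0)
            (fun ω => (X0 ω, U0 ω) = (x0, u0) ∧ A0 ω = b0) =
          dr14Sev p (fun ω => q0 (Z0 ω) b0 (X0 ω))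
            (fun ω => A0 ω = b0 ∧ U0 ω = u0 ∧ X0 ω = x0) := by
        apply dr14Sev_congr
        · intro ω; rw [hC0iff]; tauto
        · rintro ω ⟨h2, hA⟩
          obtain ⟨hX0, -⟩ := (hC0iff x0 u0 ω).1 h2
          rw [hX0]
      rw [e1]
      have hb := hbridgeq0 b0 u0 x0 hABne
      have hSq0 : dr14Sev p (fun ω => q0 (Z0 ω) b0 (X0 ω))
            (fun ω => A0 ω = b0 ∧ U0 ω = u0 ∧ X0 ω = x0) =
          cexp p (fun ω => q0 (Z0 ω) b0 (X0 ω))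
            (fun ω => A0 ω = b0 ∧ U0 ω = u0 ∧ X0 ω = x0) *
          pr p (fun ω => A0 ω = b0 ∧ U0 ω = u0 ∧ X0 ω = x0) := by
        rw [dr14_cexp_eq, div_mul_cancel₀ _ hABne]
      rw [hSq0, ← hb]
      have hcprob : cprob p (fun ω => A0 ω = b0) (fun ω => U0 ω = u0 ∧ X0 ω = x0) =
          pr p (fun ω => A0 ω = b0 ∧ U0 ω = u0 ∧ X0 ω = x0) /
            pr p (fun ω => U0 ω = u0 ∧ X0 ω = x0) := by
        rw [cprob]
      rw [hcprob, hprE0]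
      field_simp
    have eL : dr14Sev p (fun ω => (if A0 ω = b0 then (1:ℝ) else 0) * q0 (Z0 ω) b0 (X0 ω) *
          G (W0 ω, Y' b0 b1 ω) (X0 ω)) (fun ω => (X0 ω, U0 ω) = (x0, u0)) =
        dr14Sev p (fun ω =>
          (fun t : 𝒵0 × Bool => (if t.2 = b0 then (1:ℝ) else 0) * q0 t.1 b0 x0) (Z0 ω, A0 ω) *
          (fun s : 𝒲0 × ℝ => G s x0) (W0 ω, Y' b0 b1 ω))
          (fun ω => (X0 ω, U0 ω) = (x0, u0)) := by
      apply dr14Sev_congr p (fun ω => Iff.rfl)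
      intro ω hω
      obtain ⟨hX0, -⟩ := (hC0iff x0 u0 ω).1 hω
      simp only [hX0]
    have eR : dr14Sev p (fun ω => G (W0 ω, Y' b0 b1 ω) (X0 ω))
          (fun ω => (X0 ω, U0 ω) = (x0, u0)) =
        dr14Sev p (fun ω => (fun s : 𝒲0 × ℝ => G s x0) (W0 ω, Y' b0 b1 ω))
          (fun ω => (X0 ω, U0 ω) = (x0, u0)) := by
      apply dr14Sev_congr p (fun ω => Iff.rfl)
      intro ω hω
      obtain ⟨hX0, -⟩ := (hC0iff x0 u0 ω).1 hω
      simp only [hX0]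
    have keyF : dr14Sev p (fun ω =>
          (fun t : 𝒵0 × Bool => (if t.2 = b0 then (1:ℝ) else 0) * q0 t.1 b0 x0) (Z0 ω, A0 ω))
          (fun ω => (X0 ω, U0 ω) = (x0, u0)) =
        pr p (fun ω => (X0 ω, U0 ω) = (x0, u0)) := by
      exact key
    rw [eL, eR,
      dr14_condIndep_Sev (hLR0 b0 b1)
        (fun t : 𝒵0 × Bool => (if t.2 = b0 then (1:ℝ) else 0) * q0 t.1 b0 x0)
        (fun s : 𝒲0 × ℝ => G s x0) hne,
      keyF, mul_comm, mul_div_assoc, div_self hne, mul_one]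
  ---------------------------------------------------------------------------
  -- assembling the five pieces
  ---------------------------------------------------------------------------
  have hdecomp : dr14Sev p (Xi (b0, b1)) (fun ω => v (X0 ω) = c) =
      dr14Sev p (fun ω =>
        ((if A0 ω = b0 ∧ A1 ω = b1 then (1:ℝ) else 0) *
            q1 (Z0 ω, Z1 ω) (b0, b1) (X0 ω, X1 ω) * Y' b0 b1 ω -
          (if A0 ω = b0 ∧ A1 ω = b1 then (1:ℝ) else 0) *
            q1 (Z0 ω, Z1 ω) (b0, b1) (X0 ω, X1 ω) *
            h1 (W0 ω, W1' b0 ω) (b0, b1) (X0 ω, X1 ω)) +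
        ((if A0 ω = b0 then (1:ℝ) else 0) * q0 (Z0 ω) b0 (X0 ω) *
            h1 (W0 ω, W1' b0 ω) (b0, b1) (X0 ω, X1 ω) -
          (if A0 ω = b0 then (1:ℝ) else 0) * q0 (Z0 ω) b0 (X0 ω) *
            h0 (W0 ω) (b0, b1) (X0 ω)) +
        h0 (W0 ω) (b0, b1) (X0 ω)) (fun ω => v (X0 ω) = c) := by
    apply dr14Sev_congr p (fun ω => Iff.rfl)
    intro ω _
    rw [hXi b0 b1 ω]
    by_cases hA0 : A0 ω = b0
    · have hW : W1 ω = W1' b0 ω := by rw [hconsW ω, hA0]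
      by_cases hA1 : A1 ω = b1
      · have hY : Y ω = Y' b0 b1 ω := by rw [hconsY ω, hA0, hA1]
        simp only [hA0, hA1, hW, hY, and_self, if_true]
        ring
      · simp only [hA0, hA1, hW, true_and, if_false, if_true]
        ring
    · simp only [hA0, false_and, if_false]
      ring
  rw [hdecomp, dr14Sev_add, dr14Sev_add, dr14Sev_sub, dr14Sev_sub]
  -- instances of the claims
  have ha : dr14Sev p (fun ω => (if A0 ω = b0 ∧ A1 ω = b1 then (1:ℝ) else 0) *
        q1 (Z0 ω, Z1 ω) (b0, b1) (X0 ω, X1 ω) * Y' b0 b1 ω) (fun ω => v (X0 ω) = c) =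
      dr14Sev p (fun ω => (if A0 ω = b0 then (1:ℝ) else 0) * q0 (Z0 ω) b0 (X0 ω) *
        Y' b0 b1 ω) (fun ω => v (X0 ω) = c) :=
    claim1 (fun t _ => t.2.2)
  have hb : dr14Sev p (fun ω => (if A0 ω = b0 ∧ A1 ω = b1 then (1:ℝ) else 0) *
        q1 (Z0 ω, Z1 ω) (b0, b1) (X0 ω, X1 ω) *
        h1 (W0 ω, W1' b0 ω) (b0, b1) (X0 ω, X1 ω)) (fun ω => v (X0 ω) = c) =
      dr14Sev p (fun ω => (if A0 ω = b0 then (1:ℝ) else 0) * q0 (Z0 ω) b0 (X0 ω) *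
        h1 (W0 ω, W1' b0 ω) (b0, b1) (X0 ω, X1 ω)) (fun ω => v (X0 ω) = c) :=
    claim1 (fun t x => h1 (t.1, t.2.1) (b0, b1) x)
  have hd : dr14Sev p (fun ω => (if A0 ω = b0 then (1:ℝ) else 0) * q0 (Z0 ω) b0 (X0 ω) *
        h0 (W0 ω) (b0, b1) (X0 ω)) (fun ω => v (X0 ω) = c) =
      dr14Sev p (fun ω => h0 (W0 ω) (b0, b1) (X0 ω)) (fun ω => v (X0 ω) = c) :=
    claim0 (fun t x => h0 t.1 (b0, b1) x)
  have hy : dr14Sev p (fun ω => (if A0 ω = b0 then (1:ℝ) else 0) * q0 (Z0 ω) b0 (X0 ω) *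
        Y' b0 b1 ω) (fun ω => v (X0 ω) = c) =
      dr14Sev p (Y' b0 b1) (fun ω => v (X0 ω) = c) :=
    claim0 (fun t _ => t.2)
  rw [ha, hb, hd, hy]
  ring
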